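/- arXiv:2006.03712 — 2 statements merged into one kernel-verified Lean document; each statement's English description precedes it below -/
import Mathlib

section
/- Let X ⊆ ℝ^d be compact, Y ⊆ ℝ^m be nonempty, compact and convex, and let σ be a probability measure on X × Y whose marginal μ on X has full support. Let ℓ : ℝ^m × ℝ^m → ℝ be continuous, Lipschitz in its first argument uniformly in the second, and with z ↦ ℓ(z,y) strictly convex for every y. Then for every α ≥ 0 there exists a unique map f* : X → Y that is Lipschitz with constant α and satisfies L_σ(f*) ≤ L_σ(f) for every map f : X → Y that is Lipschitz with constant α, where L_σ(f) = ∫ ℓ(f(x), y) dσ(x,y). -/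
open MeasureTheory BoundedContinuousFunction in
/-- (Existence and uniqueness in Theorem 1 of the paper.) For compact
`X`, nonempty compact convex `Y`, a probability measure `σ` on `X ×ˢ Y` whose marginal
on `X` has full support, and a continuous loss `ℓ` that is Lipschitz and strictly convex
in its first argument, the Lipschitz-constrained loss minimization problem has a unique
minimizer `f* : X → Y` among maps `X → Y` that are Lipschitz with constant `α`
(uniqueness is as a map on `X`). -/
theorem lipschitz_constrained_loss_min_unique_minimizer {d m : ℕ}
    (X : Set (EuclideanSpace ℝ (Fin d))) (Y : Set (EuclideanSpace ℝ (Fin m)))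
    (hX : IsCompact X) (hYne : Y.Nonempty) (hY : IsCompact Y) (hYconv : Convex ℝ Y)
    (σ : Measure (EuclideanSpace ℝ (Fin d) × EuclideanSpace ℝ (Fin m)))
    [IsProbabilityMeasure σ]
    (hσXY : σ (X ×ˢ Y)ᶜ = 0)
    (hfullsupp : ∀ U : Set (EuclideanSpace ℝ (Fin d)),
      IsOpen U → (U ∩ X).Nonempty → 0 < σ.map Prod.fst (U ∩ X))
    (ℓ : EuclideanSpace ℝ (Fin m) × EuclideanSpace ℝ (Fin m) → ℝ)
    (hℓcont : Continuous ℓ)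
    (C : ℝ) (hℓlip : ∀ y z₁ z₂, |ℓ (z₁, y) - ℓ (z₂, y)| ≤ C * ‖z₁ - z₂‖)
    (hℓconv : ∀ y, StrictConvexOn ℝ Set.univ (fun z => ℓ (z, y)))
    (α : ℝ) (hα : 0 ≤ α) :
    ∃ fstar : EuclideanSpace ℝ (Fin d) → EuclideanSpace ℝ (Fin m),
      ((∀ x ∈ X, fstar x ∈ Y) ∧
        ∀ x₁ ∈ X, ∀ x₂ ∈ X, ‖fstar x₁ - fstar x₂‖ ≤ α * ‖x₁ - x₂‖) ∧
      (∀ f : EuclideanSpace ℝ (Fin d) → EuclideanSpace ℝ (Fin m),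
        (∀ x ∈ X, f x ∈ Y) →
        (∀ x₁ ∈ X, ∀ x₂ ∈ X, ‖f x₁ - f x₂‖ ≤ α * ‖x₁ - x₂‖) →
        (∫ p, ℓ (fstar p.1, p.2) ∂σ) ≤ ∫ p, ℓ (f p.1, p.2) ∂σ) ∧
      (∀ g : EuclideanSpace ℝ (Fin d) → EuclideanSpace ℝ (Fin m),
        (∀ x ∈ X, g x ∈ Y) →
        (∀ x₁ ∈ X, ∀ x₂ ∈ X, ‖g x₁ - g x₂‖ ≤ α * ‖x₁ - x₂‖) →
        (∀ f : EuclideanSpace ℝ (Fin d) → EuclideanSpace ℝ (Fin m),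
          (∀ x ∈ X, f x ∈ Y) →
          (∀ x₁ ∈ X, ∀ x₂ ∈ X, ‖f x₁ - f x₂‖ ≤ α * ‖x₁ - x₂‖) →
          (∫ p, ℓ (g p.1, p.2) ∂σ) ≤ ∫ p, ℓ (f p.1, p.2) ∂σ) →
        ∀ x ∈ X, g x = fstar x) := by
  classical
  obtain ⟨y₀, hy₀⟩ := hYne
  haveI : CompactSpace ↥X := isCompact_iff_compactSpace.mp hX
  -- a.e. membership in X ×ˢ Y
  have haemem : ∀ᵐ p ∂σ, p ∈ X ×ˢ Y := by
    rw [MeasureTheory.ae_iff]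
    exact hσXY
  have hXYmeas : MeasurableSet (X ×ˢ Y) :=
    (hX.isClosed.measurableSet).prod (hY.isClosed.measurableSet)
  -- uniform bound on ℓ over Y × Y
  obtain ⟨pM, _, hpM⟩ := (hY.prod hY).exists_isMaxOn (Set.Nonempty.prod ⟨y₀, hy₀⟩ ⟨y₀, hy₀⟩)
    ((continuous_abs.comp hℓcont).continuousOn)
  set M : ℝ := |ℓ pM|
  -- integrability helper
  have key_int : ∀ f : EuclideanSpace ℝ (Fin d) → EuclideanSpace ℝ (Fin m), (∀ x ∈ X, f x ∈ Y) → ContinuousOn f X →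
      Integrable (fun p : EuclideanSpace ℝ (Fin d) × EuclideanSpace ℝ (Fin m) => ℓ (f p.1, p.2)) σ := by
    intro f hfY hfc
    have hcont : ContinuousOn (fun p : EuclideanSpace ℝ (Fin d) × EuclideanSpace ℝ (Fin m) => ℓ (f p.1, p.2)) (X ×ˢ Y) := by
      apply hℓcont.comp_continuousOn
      exact (hfc.comp continuous_fst.continuousOn (fun p hp => hp.1)).prodMk
        continuous_snd.continuousOn
    have hrestrict : σ.restrict (X ×ˢ Y) = σ :=
      Measure.restrict_eq_self_of_ae_mem haemem
    have hsm : AEStronglyMeasurable (fun p : EuclideanSpace ℝ (Fin d) × EuclideanSpace ℝ (Fin m) => ℓ (f p.1, p.2)) σ := by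
      rw [← hrestrict]
      exact hcont.aestronglyMeasurable hXYmeas
    refine ⟨hsm, HasFiniteIntegral.of_bounded (C := M) ?_⟩
    filter_upwards [haemem] with p hp
    rw [Real.norm_eq_abs]
    have := hpM (show (f p.1, p.2) ∈ Y ×ˢ Y from ⟨hfY p.1 hp.1, hp.2⟩)
    simpa [M] using this
  -- the set of candidate functions as bounded continuous functions on ↥X
  set A : Set (↥X →ᵇ EuclideanSpace ℝ (Fin m)) := {f | (∀ x, f x ∈ Y) ∧
    ∀ x₁ x₂ : ↥X, dist (f x₁) (f x₂) ≤ α * dist x₁ x₂} with hA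
  have hAclosed : IsClosed A := by
    have h1 : IsClosed {f : ↥X →ᵇ EuclideanSpace ℝ (Fin m) | ∀ x, f x ∈ Y} := by
      rw [Set.setOf_forall]
      exact isClosed_iInter fun x => hY.isClosed.preimage
        (continuous_eval_const x)
    have h2 : IsClosed {f : ↥X →ᵇ EuclideanSpace ℝ (Fin m) |
        ∀ x₁ x₂ : ↥X, dist (f x₁) (f x₂) ≤ α * dist x₁ x₂} := by
      simp only [Set.setOf_forall]
      exact isClosed_iInter fun x₁ => isClosed_iInter fun x₂ =>
        isClosed_le ((continuous_eval_const x₁).dist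
          (continuous_eval_const x₂)) continuous_const
    exact h1.inter h2
  have hAcompact : IsCompact A := by
    apply BoundedContinuousFunction.arzela_ascoli₂ Y hY A hAclosed
      (fun f x hf => hf.1 x)
    intro x
    rw [Metric.equicontinuousAt_iff]
    intro ε hε
    rcases eq_or_lt_of_le hα with hα0 | hαpos
    · refine ⟨1, one_pos, fun y hxy f => ?_⟩
      calc dist (f.1 x) (f.1 y) ≤ α * dist x y := f.2.2 x y
        _ = 0 := by rw [← hα0]; ring
        _ < ε := hε
    · refine ⟨ε / α, div_pos hε hαpos, fun y hxy f => ?_⟩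
      calc dist (f.1 x) (f.1 y) ≤ α * dist x y := f.2.2 x y
        _ < α * (ε / α) := by
            rw [dist_comm] at hxy
            exact mul_lt_mul_of_pos_left hxy hαpos
        _ = ε := by field_simp
  have hAne : A.Nonempty := by
    refine ⟨BoundedContinuousFunction.const _ y₀, fun _ => hy₀, fun x₁ x₂ => ?_⟩
    simp [dist_nonneg, mul_nonneg hα dist_nonneg]
  -- extension operator
  set ext : (↥X →ᵇ EuclideanSpace ℝ (Fin m)) → EuclideanSpace ℝ (Fin d) → EuclideanSpace ℝ (Fin m) :=
    fun f x => if h : x ∈ X then f ⟨x, h⟩ else y₀ with hext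
  have hext_cont : ∀ f : ↥X →ᵇ EuclideanSpace ℝ (Fin m), ContinuousOn (ext f) X := by
    intro f
    rw [continuousOn_iff_continuous_restrict]
    have : X.domRestrict (ext f) = fun x : ↥X => f x := by
      funext x; simp [hext]
    rw [this]
    exact f.continuous
  have hext_mem : ∀ f ∈ A, ∀ x ∈ X, ext f x ∈ Y := by
    intro f hf x hx
    simp only [hext, dif_pos hx]
    exact hf.1 _
  -- the loss functional
  set Φ : (↥X →ᵇ EuclideanSpace ℝ (Fin m)) → ℝ := fun f => ∫ p, ℓ (ext f p.1, p.2) ∂σ with hΦ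
  set C' : ℝ := max C 0 with hC'
  have hℓlip' : ∀ y z₁ z₂ : EuclideanSpace ℝ (Fin m), |ℓ (z₁, y) - ℓ (z₂, y)| ≤ C' * ‖z₁ - z₂‖ := by
    intro y z₁ z₂
    exact le_trans (hℓlip y z₁ z₂)
      (mul_le_mul_of_nonneg_right (le_max_left _ _) (norm_nonneg _))
  have hΦcont : ContinuousOn Φ A := by
    refine (LipschitzOnWith.of_dist_le_mul (K := C'.toNNReal) ?_).continuousOn
    intro f hf g hg
    have hif := key_int (ext f) (hext_mem f hf) (hext_cont f)
    have hig := key_int (ext g) (hext_mem g hg) (hext_cont g)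
    have hptwise : ∀ p : EuclideanSpace ℝ (Fin d) × EuclideanSpace ℝ (Fin m),
        |ℓ (ext f p.1, p.2) - ℓ (ext g p.1, p.2)| ≤ C' * dist f g := by
      intro p
      refine le_trans (hℓlip' p.2 _ _) (mul_le_mul_of_nonneg_left ?_ (le_max_right C 0))
      by_cases h : p.1 ∈ X
      · simp only [hext, dif_pos h]
        rw [← dist_eq_norm]
        exact BoundedContinuousFunction.dist_coe_le_dist _
      · simp [hext, dif_neg h, dist_nonneg]
    rw [Real.dist_eq, hΦ]
    calc |(∫ p, ℓ (ext f p.1, p.2) ∂σ) - ∫ p, ℓ (ext g p.1, p.2) ∂σ|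
        = |∫ p, (ℓ (ext f p.1, p.2) - ℓ (ext g p.1, p.2)) ∂σ| := by
          rw [integral_sub hif hig]
      _ ≤ ∫ p, |ℓ (ext f p.1, p.2) - ℓ (ext g p.1, p.2)| ∂σ := by
          simpa [Real.norm_eq_abs] using
            norm_integral_le_integral_norm (μ := σ)
              (f := fun p : EuclideanSpace ℝ (Fin d) × EuclideanSpace ℝ (Fin m) => ℓ (ext f p.1, p.2) - ℓ (ext g p.1, p.2))
      _ ≤ ∫ _p, C' * dist f g ∂σ := by
          refine integral_mono (hif.sub hig).abs (integrable_const _) ?_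
          intro p; exact hptwise p
      _ = C' * dist f g := by simp
      _ = C'.toNNReal * dist f g := by
          rw [Real.coe_toNNReal C' (le_max_right C 0)]
  obtain ⟨g₀, hg₀A, hg₀min⟩ := hAcompact.exists_isMinOn hAne hΦcont
  -- conversion of a candidate to a member of A
  have conv : ∀ f : EuclideanSpace ℝ (Fin d) → EuclideanSpace ℝ (Fin m), (∀ x ∈ X, f x ∈ Y) →
      (∀ x₁ ∈ X, ∀ x₂ ∈ X, ‖f x₁ - f x₂‖ ≤ α * ‖x₁ - x₂‖) →
      ∃ fb ∈ A, ∀ x : ↥X, fb x = f x := by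
    intro f hfY hflip
    have hcont : Continuous (fun x : ↥X => f x) := by
      rw [Metric.continuous_iff]
      intro x ε hε
      rcases eq_or_lt_of_le hα with hα0 | hαpos
      · refine ⟨1, one_pos, fun y hxy => ?_⟩
        have := hflip y y.2 x x.2
        rw [dist_eq_norm]
        calc ‖f y - f x‖ ≤ α * ‖(y:EuclideanSpace ℝ (Fin d)) - x‖ := this
          _ = 0 := by rw [← hα0]; ring
          _ < ε := hε
      · refine ⟨ε / α, div_pos hε hαpos, fun y hxy => ?_⟩
        rw [dist_eq_norm]
        calc ‖f y - f x‖ ≤ α * ‖(y:EuclideanSpace ℝ (Fin d)) - x‖ := hflip y y.2 x x.2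
          _ < α * (ε / α) := by
              apply mul_lt_mul_of_pos_left _ hαpos
              rw [← dist_eq_norm, ← Subtype.dist_eq]; exact hxy
          _ = ε := by field_simp
    refine ⟨BoundedContinuousFunction.mkOfCompact ⟨fun x : ↥X => f x, hcont⟩,
      ⟨fun x => hfY x x.2, fun x₁ x₂ => ?_⟩, fun x => rfl⟩
    simp only [BoundedContinuousFunction.mkOfCompact_apply, ContinuousMap.coe_mk]
    rw [dist_eq_norm, Subtype.dist_eq, dist_eq_norm]
    exact hflip x₁ x₁.2 x₂ x₂.2
  -- if functions agree on X, integrals agree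
  have int_congr : ∀ f g : EuclideanSpace ℝ (Fin d) → EuclideanSpace ℝ (Fin m), (∀ x ∈ X, f x = g x) →
      (∫ p, ℓ (f p.1, p.2) ∂σ) = ∫ p, ℓ (g p.1, p.2) ∂σ := by
    intro f g hfg
    apply integral_congr_ae
    filter_upwards [haemem] with p hp
    rw [hfg p.1 hp.1]
  set fstar : EuclideanSpace ℝ (Fin d) → EuclideanSpace ℝ (Fin m) := ext g₀ with hfstar
  have hfstarY : ∀ x ∈ X, fstar x ∈ Y := hext_mem g₀ hg₀A
  have hfstarlip : ∀ x₁ ∈ X, ∀ x₂ ∈ X, ‖fstar x₁ - fstar x₂‖ ≤ α * ‖x₁ - x₂‖ := by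
    intro x₁ h₁ x₂ h₂
    simp only [hfstar, hext, dif_pos h₁, dif_pos h₂]
    have := hg₀A.2 ⟨x₁, h₁⟩ ⟨x₂, h₂⟩
    rwa [dist_eq_norm, Subtype.dist_eq, dist_eq_norm] at this
  have hmin : ∀ f : EuclideanSpace ℝ (Fin d) → EuclideanSpace ℝ (Fin m), (∀ x ∈ X, f x ∈ Y) →
      (∀ x₁ ∈ X, ∀ x₂ ∈ X, ‖f x₁ - f x₂‖ ≤ α * ‖x₁ - x₂‖) →
      (∫ p, ℓ (fstar p.1, p.2) ∂σ) ≤ ∫ p, ℓ (f p.1, p.2) ∂σ := by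
    intro f hfY hflip
    obtain ⟨fb, hfbA, hfb⟩ := conv f hfY hflip
    have h1 : (∫ p, ℓ (ext fb p.1, p.2) ∂σ) = ∫ p, ℓ (f p.1, p.2) ∂σ := by
      apply int_congr
      intro x hx
      simp only [hext, dif_pos hx]
      exact hfb ⟨x, hx⟩
    calc (∫ p, ℓ (fstar p.1, p.2) ∂σ) = Φ g₀ := rfl
      _ ≤ Φ fb := hg₀min hfbA
      _ = ∫ p, ℓ (f p.1, p.2) ∂σ := h1
  refine ⟨fstar, ⟨hfstarY, hfstarlip⟩, hmin, ?_⟩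
  -- uniqueness
  intro g hgY hglip hgmin x₀ hx₀
  by_contra hne
  -- the midpoint function
  set mid : EuclideanSpace ℝ (Fin d) → EuclideanSpace ℝ (Fin m) := fun x => (2⁻¹ : ℝ) • g x + (2⁻¹ : ℝ) • fstar x with hmid
  have hmidY : ∀ x ∈ X, mid x ∈ Y := fun x hx =>
    hYconv (hgY x hx) (hfstarY x hx) (by norm_num) (by norm_num) (by norm_num)
  have hmidlip : ∀ x₁ ∈ X, ∀ x₂ ∈ X, ‖mid x₁ - mid x₂‖ ≤ α * ‖x₁ - x₂‖ := by
    intro x₁ h₁ x₂ h₂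
    have : mid x₁ - mid x₂
        = (2⁻¹ : ℝ) • (g x₁ - g x₂) + (2⁻¹ : ℝ) • (fstar x₁ - fstar x₂) := by
      simp only [hmid, smul_sub]; abel
    rw [this]
    calc ‖(2⁻¹ : ℝ) • (g x₁ - g x₂) + (2⁻¹ : ℝ) • (fstar x₁ - fstar x₂)‖
        ≤ ‖(2⁻¹ : ℝ) • (g x₁ - g x₂)‖ + ‖(2⁻¹ : ℝ) • (fstar x₁ - fstar x₂)‖ :=
          norm_add_le _ _
      _ = 2⁻¹ * ‖g x₁ - g x₂‖ + 2⁻¹ * ‖fstar x₁ - fstar x₂‖ := by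
          rw [norm_smul, norm_smul]; norm_num
      _ ≤ 2⁻¹ * (α * ‖x₁ - x₂‖) + 2⁻¹ * (α * ‖x₁ - x₂‖) := by
          gcongr
          · exact hglip x₁ h₁ x₂ h₂
          · exact hfstarlip x₁ h₁ x₂ h₂
      _ = α * ‖x₁ - x₂‖ := by ring
  -- continuity of the functions on X
  have hLipCont : ∀ f : EuclideanSpace ℝ (Fin d) → EuclideanSpace ℝ (Fin m),
      (∀ x₁ ∈ X, ∀ x₂ ∈ X, ‖f x₁ - f x₂‖ ≤ α * ‖x₁ - x₂‖) → ContinuousOn f X := by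
    intro f hf
    apply LipschitzOnWith.continuousOn (K := α.toNNReal)
    apply LipschitzOnWith.of_dist_le_mul
    intro x hx y hy
    rw [dist_eq_norm, dist_eq_norm]
    calc ‖f x - f y‖ ≤ α * ‖x - y‖ := hf x hx y hy
      _ ≤ α.toNNReal * ‖x - y‖ := by
          apply mul_le_mul_of_nonneg_right _ (norm_nonneg _)
          simp [Real.coe_toNNReal α hα]
  have hgcont : ContinuousOn g X := hLipCont g hglip
  have hfstarcont : ContinuousOn fstar X := hLipCont fstar hfstarlip
  have hmidcont : ContinuousOn mid X :=
    ((hgcont.const_smul (2⁻¹ : ℝ)).add (hfstarcont.const_smul (2⁻¹ : ℝ)))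
  -- integrability
  have hig := key_int g hgY hgcont
  have hif := key_int fstar hfstarY hfstarcont
  have him := key_int mid hmidY hmidcont
  set Lg : ℝ := ∫ p, ℓ (g p.1, p.2) ∂σ
  set Lf : ℝ := ∫ p, ℓ (fstar p.1, p.2) ∂σ
  set Lm : ℝ := ∫ p, ℓ (mid p.1, p.2) ∂σ
  have hLgLf : Lg = Lf :=
    le_antisymm (hgmin fstar hfstarY hfstarlip) (hmin g hgY hglip)
  have hLmge : Lf ≤ Lm := hmin mid hmidY hmidlip
  -- the nonnegative function
  set h : EuclideanSpace ℝ (Fin d) × EuclideanSpace ℝ (Fin m) → ℝ := fun p =>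
    2⁻¹ * ℓ (g p.1, p.2) + 2⁻¹ * ℓ (fstar p.1, p.2) - ℓ (mid p.1, p.2) with hh
  have hh_nonneg : ∀ p, 0 ≤ h p := by
    intro p
    have := (hℓconv p.2).convexOn.2 (Set.mem_univ (g p.1)) (Set.mem_univ (fstar p.1))
      (by norm_num : (0:ℝ) ≤ 2⁻¹) (by norm_num : (0:ℝ) ≤ 2⁻¹) (by norm_num)
    simp only [smul_eq_mul] at this
    simp only [hh, hmid]
    linarith
  have hh_int : Integrable h σ := ((hig.const_mul _).add (hif.const_mul _)).sub him
  have hh_integral : (∫ p, h p ∂σ) = 0 := by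
    have i1 : Integrable (fun p : EuclideanSpace ℝ (Fin d) × EuclideanSpace ℝ (Fin m) =>
        2⁻¹ * ℓ (g p.1, p.2)) σ := hig.const_mul _
    have i2 : Integrable (fun p : EuclideanSpace ℝ (Fin d) × EuclideanSpace ℝ (Fin m) =>
        2⁻¹ * ℓ (fstar p.1, p.2)) σ := hif.const_mul _
    have i12 : Integrable (fun p : EuclideanSpace ℝ (Fin d) × EuclideanSpace ℝ (Fin m) =>
        2⁻¹ * ℓ (g p.1, p.2) + 2⁻¹ * ℓ (fstar p.1, p.2)) σ := i1.add i2
    have hval : (∫ p, h p ∂σ) = 2⁻¹ * Lg + 2⁻¹ * Lf - Lm := by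
      simp only [hh]
      rw [integral_sub i12 him, integral_add i1 i2, integral_const_mul, integral_const_mul]
    rw [hval, hLgLf]
    have h0 : 2⁻¹ * Lf + 2⁻¹ * Lf - Lm ≤ 0 := by linarith
    have h1 : 0 ≤ (∫ p, h p ∂σ) := integral_nonneg hh_nonneg
    rw [hval, hLgLf] at h1
    linarith
  have hh_ae : h =ᵐ[σ] 0 :=
    (integral_eq_zero_iff_of_nonneg_ae (Filter.Eventually.of_forall hh_nonneg)
      hh_int).mp hh_integral
  -- strict positivity where g ≠ fstar
  have hstrict : ∀ p : EuclideanSpace ℝ (Fin d) × EuclideanSpace ℝ (Fin m), g p.1 ≠ fstar p.1 → 0 < h p := by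
    intro p hpne
    have := (hℓconv p.2).2 (Set.mem_univ (g p.1)) (Set.mem_univ (fstar p.1)) hpne
      (by norm_num : (0:ℝ) < 2⁻¹) (by norm_num : (0:ℝ) < 2⁻¹) (by norm_num)
    simp only [smul_eq_mul] at this
    simp only [hh, hmid]
    linarith
  -- extract an open set around points where g ≠ fstar
  set φ : ↥X → ℝ := fun x => dist (g x) (fstar x) with hφ
  have hφcont : Continuous φ := by
    have h1 : Continuous (fun x : ↥X => g x) :=
      continuousOn_iff_continuous_restrict.mp hgcont
    have h2 : Continuous (fun x : ↥X => fstar x) :=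
      continuousOn_iff_continuous_restrict.mp hfstarcont
    exact h1.dist h2
  have hVopen : IsOpen (φ ⁻¹' Set.Ioi 0) := isOpen_Ioi.preimage hφcont
  rw [isOpen_induced_iff] at hVopen
  obtain ⟨U, hUopen, hUeq⟩ := hVopen
  have hx₀U : x₀ ∈ U ∩ X := by
    constructor
    · have : (⟨x₀, hx₀⟩ : ↥X) ∈ φ ⁻¹' Set.Ioi 0 := by
        simp only [hφ, Set.mem_preimage, Set.mem_Ioi]
        exact dist_pos.mpr hne
      rw [← hUeq] at this
      exact this
    · exact hx₀
  have hUXne : (U ∩ X).Nonempty := ⟨x₀, hx₀U⟩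
  have hpos := hfullsupp U hUopen hUXne
  -- but the set has measure zero
  have hUXmeas : MeasurableSet (U ∩ X) := hUopen.measurableSet.inter hX.isClosed.measurableSet
  have hzero : σ.map Prod.fst (U ∩ X) = 0 := by
    rw [Measure.map_apply measurable_fst hUXmeas]
    have : ∀ᵐ p ∂σ, p ∉ Prod.fst ⁻¹' (U ∩ X) := by
      filter_upwards [hh_ae, haemem] with p hp hpmem
      intro hpU
      have h1 : (⟨p.1, hpU.2⟩ : ↥X) ∈ φ ⁻¹' Set.Ioi 0 := by
        rw [← hUeq]; exact hpU.1
      simp only [hφ, Set.mem_preimage, Set.mem_Ioi] at h1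
      have h2 : g p.1 ≠ fstar p.1 := dist_pos.mp h1
      have := hstrict p h2
      rw [hp] at this
      exact lt_irrefl 0 this
    rw [MeasureTheory.ae_iff] at this
    simp only [not_not] at this; exact this
  rw [hzero] at hpos
  exact lt_irrefl 0 hpos
end

section
/- Let X ⊆ ℝ^d be compact, Y ⊆ ℝ^m be nonempty, compact and convex, σ a probability measure on X × Y, and ℓ : ℝ^m × ℝ^m → ℝ continuous and Lipschitz in its first argument uniformly in the second. Let c ∈ ℝ and suppose the feasible set S = {f : X → Y : f is Lipschitz and L_σ(f) ≤ c} is nonempty, where L_σ(f) = ∫ ℓ(f(x), y) dσ(x,y). Then the infimum over S of the Lipschitz constant is attained: there exists f° ∈ S and K₀ ≥ 0 such that f° is Lipschitz with constant K₀, L_σ(f°) ≤ c, and K₀ ≤ K for every g ∈ S and every K such that g is Lipschitz with constant K. -/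
set_option maxHeartbeats 1000000
set_option synthInstance.maxHeartbeats 1000000


open MeasureTheory BoundedContinuousFunction Topology Filter

/-- (Attainment of the minimum Lipschitz constant under a loss margin;
part of Theorem 3 of the paper.) If `X` is compact, `Y` is nonempty compact convex, `σ`
is a probability measure on `X ×ˢ Y`, `ℓ` is continuous and Lipschitz in its first
argument uniformly in the second, and the feasible set
`S = {f : X → Y Lipschitz | L_σ(f) ≤ c}` is nonempty, then the infimum over `S` of the
Lipschitz constant is attained by some `f° ∈ S` with constant `K₀`. -/
theorem loss_constrained_lipschitz_min_attained {d m : ℕ}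
    (X : Set (EuclideanSpace ℝ (Fin d))) (Y : Set (EuclideanSpace ℝ (Fin m)))
    (hX : IsCompact X) (hYne : Y.Nonempty) (hY : IsCompact Y) (hYconv : Convex ℝ Y)
    (σ : Measure (EuclideanSpace ℝ (Fin d) × EuclideanSpace ℝ (Fin m)))
    [IsProbabilityMeasure σ]
    (hσXY : σ (X ×ˢ Y)ᶜ = 0)
    (ℓ : EuclideanSpace ℝ (Fin m) × EuclideanSpace ℝ (Fin m) → ℝ)
    (hℓcont : Continuous ℓ)
    (C : ℝ) (hℓlip : ∀ y z₁ z₂, |ℓ (z₁, y) - ℓ (z₂, y)| ≤ C * ‖z₁ - z₂‖)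
    (c : ℝ)
    (hfeas : ∃ f₀ : EuclideanSpace ℝ (Fin d) → EuclideanSpace ℝ (Fin m),
      (∀ x ∈ X, f₀ x ∈ Y) ∧
      (∃ K : ℝ, 0 ≤ K ∧ ∀ x₁ ∈ X, ∀ x₂ ∈ X, ‖f₀ x₁ - f₀ x₂‖ ≤ K * ‖x₁ - x₂‖) ∧
      (∫ p, ℓ (f₀ p.1, p.2) ∂σ) ≤ c) :
    ∃ (fcirc : EuclideanSpace ℝ (Fin d) → EuclideanSpace ℝ (Fin m)) (K₀ : ℝ),
      0 ≤ K₀ ∧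
      (∀ x ∈ X, fcirc x ∈ Y) ∧
      (∀ x₁ ∈ X, ∀ x₂ ∈ X, ‖fcirc x₁ - fcirc x₂‖ ≤ K₀ * ‖x₁ - x₂‖) ∧
      (∫ p, ℓ (fcirc p.1, p.2) ∂σ) ≤ c ∧
      (∀ (g : EuclideanSpace ℝ (Fin d) → EuclideanSpace ℝ (Fin m)) (K : ℝ),
        0 ≤ K →
        (∀ x ∈ X, g x ∈ Y) →
        (∀ x₁ ∈ X, ∀ x₂ ∈ X, ‖g x₁ - g x₂‖ ≤ K * ‖x₁ - x₂‖) →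
        (∫ p, ℓ (g p.1, p.2) ∂σ) ≤ c →
        K₀ ≤ K) := by
  classical
  haveI : CompactSpace ↥X := isCompact_iff_compactSpace.mp hX
  obtain ⟨y₀, hy₀⟩ := hYne
  -- extension of a function on `X` to the whole space
  set ee : (↥X →ᵇ (EuclideanSpace ℝ (Fin m))) → (EuclideanSpace ℝ (Fin d)) → (EuclideanSpace ℝ (Fin m)) :=
    fun f x => if h : x ∈ X then f ⟨x, h⟩ else y₀ with hee
  set L : (↥X →ᵇ (EuclideanSpace ℝ (Fin m))) → ℝ := fun f => ∫ p, ℓ (ee f p.1, p.2) ∂σ with hL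
  have haeXY : ∀ᵐ p ∂σ, p ∈ X ×ˢ Y := by
    rw [MeasureTheory.ae_iff]
    exact hσXY
  -- bound for ℓ on Y ×ˢ Y
  obtain ⟨z₀, hz₀, hMx⟩ := (hY.prod hY).exists_isMaxOn ⟨(y₀, y₀), hy₀, hy₀⟩
    (hℓcont.abs.continuousOn)
  set M : ℝ := |ℓ z₀| with hMdef
  have hM : ∀ z ∈ Y ×ˢ Y, |ℓ z| ≤ M := hMx
  -- measurability of the extension and the integrand
  have hmeas : ∀ f : ↥X →ᵇ (EuclideanSpace ℝ (Fin m)), Measurable fun p : (EuclideanSpace ℝ (Fin d)) × (EuclideanSpace ℝ (Fin m)) => ℓ (ee f p.1, p.2) := by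
    intro f
    have h1 : Measurable (ee f) := by
      refine Measurable.dite (f := fun x : ↥X => f x) (g := fun _ => y₀)
        f.continuous.measurable measurable_const hX.isClosed.measurableSet
    exact hℓcont.measurable.comp ((h1.comp measurable_fst).prodMk measurable_snd)
  have hint : ∀ f : ↥X →ᵇ (EuclideanSpace ℝ (Fin m)), (∀ x : ↥X, f x ∈ Y) →
      Integrable (fun p : (EuclideanSpace ℝ (Fin d)) × (EuclideanSpace ℝ (Fin m)) => ℓ (ee f p.1, p.2)) σ := by
    intro f hfY
    refine Integrable.mono' (integrable_const M) (hmeas f).aestronglyMeasurable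
      (haeXY.mono fun p hp => ?_)
    rw [Real.norm_eq_abs]
    refine hM _ ⟨?_, hp.2⟩
    rw [hee]
    simp only [dif_pos hp.1]
    exact hfY _
  set C' : ℝ := max C 0 with hC'
  have hC'0 : 0 ≤ C' := le_max_right C 0
  -- uniform continuity estimate for L
  have hLdiff : ∀ f g : ↥X →ᵇ (EuclideanSpace ℝ (Fin m)), (∀ x : ↥X, f x ∈ Y) → (∀ x : ↥X, g x ∈ Y) →
      |L f - L g| ≤ C' * dist f g := by
    intro f g hfY hgY
    have hif := hint f hfY
    have hig := hint g hgY
    rw [hL]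
    rw [← integral_sub hif hig]
    have h1 : |∫ p, (ℓ (ee f p.1, p.2) - ℓ (ee g p.1, p.2)) ∂σ|
        ≤ ∫ p, |ℓ (ee f p.1, p.2) - ℓ (ee g p.1, p.2)| ∂σ := by
      simpa [Real.norm_eq_abs] using
        norm_integral_le_integral_norm (μ := σ)
          (f := fun p : (EuclideanSpace ℝ (Fin d)) × (EuclideanSpace ℝ (Fin m)) => ℓ (ee f p.1, p.2) - ℓ (ee g p.1, p.2))
    refine h1.trans ?_
    have h2 : ∫ p, |ℓ (ee f p.1, p.2) - ℓ (ee g p.1, p.2)| ∂σ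
        ≤ ∫ _p, C' * dist f g ∂σ := by
      refine integral_mono_ae (hif.sub hig).abs (integrable_const _)
        (haeXY.mono fun p hp => ?_)
      have hx : p.1 ∈ X := hp.1
      have heq : ee f p.1 = f ⟨p.1, hx⟩ := by rw [hee]; simp [dif_pos hx]
      have heq' : ee g p.1 = g ⟨p.1, hx⟩ := by rw [hee]; simp [dif_pos hx]
      calc |ℓ (ee f p.1, p.2) - ℓ (ee g p.1, p.2)|
          ≤ C * ‖ee f p.1 - ee g p.1‖ := hℓlip _ _ _
        _ ≤ C' * dist f g := by
            rw [heq, heq']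
            have hd : ‖f ⟨p.1, hx⟩ - g ⟨p.1, hx⟩‖ ≤ dist f g := by
              rw [← dist_eq_norm]
              exact BoundedContinuousFunction.dist_coe_le_dist _
            exact mul_le_mul (le_max_left C 0) hd (norm_nonneg _) hC'0
    refine h2.trans ?_
    simp [measure_univ]
  -- the value of L on functions agreeing with a given global function on X
  have hLcongr : ∀ (g : (EuclideanSpace ℝ (Fin d)) → (EuclideanSpace ℝ (Fin m))) (f : ↥X →ᵇ (EuclideanSpace ℝ (Fin m))), (∀ x : ↥X, f x = g ↑x) →
      L f = ∫ p, ℓ (g p.1, p.2) ∂σ := by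
    intro g f hfg
    refine integral_congr_ae (haeXY.mono fun p hp => ?_)
    have hx : p.1 ∈ X := hp.1
    show ℓ (ee f p.1, p.2) = ℓ (g p.1, p.2)
    have : ee f p.1 = f ⟨p.1, hx⟩ := by rw [hee]; simp [dif_pos hx]
    rw [this, hfg ⟨p.1, hx⟩]
  -- the set of achievable Lipschitz constants
  set A : Set ℝ := {K | 0 ≤ K ∧ ∃ g : (EuclideanSpace ℝ (Fin d)) → (EuclideanSpace ℝ (Fin m)),
      (∀ x ∈ X, g x ∈ Y) ∧
      (∀ x₁ ∈ X, ∀ x₂ ∈ X, ‖g x₁ - g x₂‖ ≤ K * ‖x₁ - x₂‖) ∧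
      (∫ p, ℓ (g p.1, p.2) ∂σ) ≤ c} with hA
  have hAne : A.Nonempty := by
    obtain ⟨f₀, hf₀Y, ⟨K, hK0, hKlip⟩, hf₀c⟩ := hfeas
    exact ⟨K, hK0, f₀, hf₀Y, hKlip, hf₀c⟩
  have hAbdd : BddBelow A := ⟨0, fun K hK => hK.1⟩
  set K₀ : ℝ := sInf A with hK₀
  have hK₀0 : 0 ≤ K₀ := le_csInf hAne fun K hK => hK.1
  -- build a bounded continuous function from a global feasible function
  have hbuild : ∀ (g : (EuclideanSpace ℝ (Fin d)) → (EuclideanSpace ℝ (Fin m))) (K : ℝ),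
      (∀ x₁ ∈ X, ∀ x₂ ∈ X, ‖g x₁ - g x₂‖ ≤ K * ‖x₁ - x₂‖) →
      ∃ f : ↥X →ᵇ (EuclideanSpace ℝ (Fin m)), ∀ x : ↥X, f x = g ↑x := by
    intro g K hKlip
    have hlip : LipschitzWith (Real.toNNReal K) (fun x : ↥X => g ↑x) := by
      refine LipschitzWith.of_dist_le_mul fun x y => ?_
      rw [dist_eq_norm, Subtype.dist_eq, dist_eq_norm]
      refine (hKlip _ x.2 _ y.2).trans ?_
      refine mul_le_mul_of_nonneg_right ?_ (norm_nonneg _)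
      exact Real.le_coe_toNNReal K
    exact ⟨BoundedContinuousFunction.mkOfCompact ⟨fun x : ↥X => g ↑x, hlip.continuous⟩,
      fun x => rfl⟩
  -- the nested family of feasible sets
  set F : ℕ → Set (↥X →ᵇ (EuclideanSpace ℝ (Fin m))) := fun n =>
    {f | (∀ x : ↥X, f x ∈ Y) ∧
      (∀ x₁ x₂ : ↥X, ‖f x₁ - f x₂‖ ≤ (K₀ + 1 / (n + 1)) * ‖(x₁ : (EuclideanSpace ℝ (Fin d))) - (x₂ : (EuclideanSpace ℝ (Fin d)))‖) ∧
      L f ≤ c} with hF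
  have hFmono : ∀ n, F (n + 1) ⊆ F n := by
    intro n f hf
    refine ⟨hf.1, fun x₁ x₂ => (hf.2.1 x₁ x₂).trans ?_, hf.2.2⟩
    refine mul_le_mul_of_nonneg_right ?_ (norm_nonneg _)
    have h1 : (0:ℝ) < (n:ℝ) + 1 := by positivity
    have : (1 : ℝ) / ((n:ℝ) + 1 + 1) ≤ 1 / ((n:ℝ) + 1) := by
      apply one_div_le_one_div_of_le h1; linarith
    push_cast
    linarith
  have hFne : ∀ n, (F n).Nonempty := by
    intro n
    have hlt : K₀ < K₀ + 1 / (n + 1) := by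
      have : (0:ℝ) < 1 / (n + 1) := by positivity
      linarith
    obtain ⟨K, hKA, hKlt⟩ := exists_lt_of_csInf_lt hAne hlt
    obtain ⟨hK0, g, hgY, hglip, hgc⟩ := hKA
    obtain ⟨f, hfg⟩ := hbuild g K hglip
    refine ⟨f, fun x => by rw [hfg]; exact hgY _ x.2, fun x₁ x₂ => ?_, ?_⟩
    · rw [hfg, hfg]
      refine (hglip _ x₁.2 _ x₂.2).trans ?_
      exact mul_le_mul_of_nonneg_right hKlt.le (norm_nonneg _)
    · rw [hLcongr g f hfg]; exact hgc
  have hFclosed : ∀ n, IsClosed (F n) := by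
    intro n
    refine IsSeqClosed.isClosed ?_
    intro u f hu huf
    have hev : ∀ x : ↥X, Filter.Tendsto (fun k => u k x) Filter.atTop (𝓝 (f x)) := by
      intro x
      exact ((continuous_eval_const (F := ↥X →ᵇ (EuclideanSpace ℝ (Fin m))) x).tendsto f).comp huf
    have hfY : ∀ x : ↥X, f x ∈ Y := by
      intro x
      exact hY.isClosed.mem_of_tendsto (hev x) (Filter.Eventually.of_forall fun k => (hu k).1 x)
    refine ⟨hfY, fun x₁ x₂ => ?_, ?_⟩
    · have h1 : Filter.Tendsto (fun k => ‖u k x₁ - u k x₂‖) Filter.atTop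
          (𝓝 ‖f x₁ - f x₂‖) := ((hev x₁).sub (hev x₂)).norm
      exact le_of_tendsto h1 (Filter.Eventually.of_forall fun k => (hu k).2.1 x₁ x₂)
    · have h2 : Filter.Tendsto (fun k => L (u k)) Filter.atTop (𝓝 (L f)) := by
        rw [tendsto_iff_dist_tendsto_zero]
        have hb : Filter.Tendsto (fun k => C' * dist (u k) f) Filter.atTop (𝓝 (C' * 0)) :=
          tendsto_const_nhds.mul (tendsto_iff_dist_tendsto_zero.mp huf)
        rw [mul_zero] at hb
        refine squeeze_zero (fun k => dist_nonneg) (fun k => ?_) hb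
        rw [Real.dist_eq]
        exact hLdiff (u k) f (hu k).1 hfY
      exact le_of_tendsto h2 (Filter.Eventually.of_forall fun k => (hu k).2.2)
  have hF0cpt : IsCompact (F 0) := by
    refine BoundedContinuousFunction.arzela_ascoli₂ Y hY (F 0) (hFclosed 0)
      (fun f x hf => hf.1 x) ?_
    refine Metric.equicontinuous_of_continuity_modulus (fun t => (K₀ + 1) * t) ?_ _ ?_
    · simpa using ((continuous_mul_left (K₀ + 1)).tendsto (0:ℝ))
    · rintro x y ⟨f, hf⟩
      have := hf.2.1 x y
      rw [dist_eq_norm, Subtype.dist_eq, dist_eq_norm]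
      simpa using this
  obtain ⟨f, hf⟩ := IsCompact.nonempty_iInter_of_sequence_nonempty_isCompact_isClosed
    F hFmono hFne hF0cpt hFclosed
  simp only [Set.mem_iInter] at hf
  refine ⟨ee f, K₀, hK₀0, ?_, ?_, ?_, ?_⟩
  · intro x hx
    rw [hee]; simp only [dif_pos hx]; exact (hf 0).1 _
  · intro x₁ hx₁ x₂ hx₂
    rw [hee]; simp only [dif_pos hx₁, dif_pos hx₂]
    have h0 : Filter.Tendsto (fun n : ℕ => K₀ + 1 / (n + 1 : ℝ)) Filter.atTop
        (𝓝 (K₀ + 0)) := tendsto_const_nhds.add tendsto_one_div_add_atTop_nhds_zero_nat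
    rw [add_zero] at h0
    have h1 : Filter.Tendsto (fun n : ℕ => (K₀ + 1 / (n + 1 : ℝ)) * ‖x₁ - x₂‖)
        Filter.atTop (𝓝 (K₀ * ‖x₁ - x₂‖)) := h0.mul tendsto_const_nhds
    exact ge_of_tendsto' h1 fun n => (hf n).2.1 ⟨x₁, hx₁⟩ ⟨x₂, hx₂⟩
  · exact (hf 0).2.2
  · intro g K hK0 hgY hglip hgc
    exact csInf_le hAbdd ⟨hK0, g, hgY, hglip, hgc⟩
end
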